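/- Let Γ = (V,E) be a directed graph with countably many vertices, finite degree at each vertex, and such that for each edge e the reversed edge −e is also in E. Let (R_v)_{v∈V} be integers. Suppose there exist real numbers p_e (e ∈ E) with p_e = −p_{−e} for every e, and Σ_{e ∈ E_v} p_e = R_v for every v, where E_v is the set of edges starting at v. Then there exist integers t_e ∈ {⌊p_e⌋, ⌊p_e⌋ + 1} such that t_e = −t_{−e} for every e ∈ E and Σ_{e ∈ E_v} t_e = R_v for every v ∈ V. -/

import Mathlib

namespace Stmt10

/-- `x` is an integer. -/
def Intl (x : ℝ) : Prop := ∃ n : ℤ, x = n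

lemma intl_intCast (n : ℤ) : Intl (n : ℝ) := ⟨n, rfl⟩

lemma intl_zero : Intl 0 := ⟨0, by simp⟩

lemma Intl.neg {x : ℝ} (h : Intl x) : Intl (-x) := by
  obtain ⟨n, rfl⟩ := h; exact ⟨-n, by push_cast; ring⟩

lemma intl_neg_iff {x : ℝ} : Intl (-x) ↔ Intl x :=
  ⟨fun h => by simpa using h.neg, Intl.neg⟩

lemma Intl.add {x y : ℝ} (hx : Intl x) (hy : Intl y) : Intl (x + y) := by
  obtain ⟨n, rfl⟩ := hx; obtain ⟨m, rfl⟩ := hy; exact ⟨n + m, by push_cast; ring⟩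

lemma Intl.sub {x y : ℝ} (hx : Intl x) (hy : Intl y) : Intl (x - y) := by
  obtain ⟨n, rfl⟩ := hx; obtain ⟨m, rfl⟩ := hy; exact ⟨n - m, by push_cast; ring⟩

lemma intl_sum {α : Type*} {s : Finset α} {f : α → ℝ} (h : ∀ i ∈ s, Intl (f i)) :
    Intl (∑ i ∈ s, f i) := by
  classical
  induction s using Finset.induction_on with
  | empty => simpa using intl_zero
  | @insert a s' hx ih =>
    rw [Finset.sum_insert hx]
    exact (h a (Finset.mem_insert_self a s')).add
      (ih fun i hi => h i (Finset.mem_insert_of_mem hi))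

lemma Intl.floor_eq {x : ℝ} (h : Intl x) : (⌊x⌋ : ℝ) = x := by
  obtain ⟨n, rfl⟩ := h; simp

lemma not_intl_floor_lt {x : ℝ} (h : ¬ Intl x) : (⌊x⌋ : ℝ) < x := by
  rcases lt_or_eq_of_le (Int.floor_le x) with h' | h'
  · exact h'
  · exact absurd ⟨⌊x⌋, h'.symm⟩ h

lemma floor_neg_of_not_intl {x : ℝ} (h : ¬ Intl x) : ⌊-x⌋ = -⌊x⌋ - 1 := by
  rw [Int.floor_eq_iff]
  push_cast
  constructor
  · linarith [Int.lt_floor_add_one x]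
  · linarith [not_intl_floor_lt h]

section Graph

variable {V : Type*} (E : Set (V × V)) (p : V × V → ℝ)

open Classical in
/-- Lower bound for the value on edge `e`. -/
noncomputable def lb (e : V × V) : ℝ :=
  if e ∈ E then (if Intl (p e) then p e else (⌊p e⌋ : ℝ)) else 0

open Classical in
noncomputable def ub (e : V × V) : ℝ :=
  if e ∈ E then (if Intl (p e) then p e else (⌊p e⌋ : ℝ) + 1) else 0

/-- A "good" function: within bounds and antisymmetric on `E`. -/
def Good (q : V × V → ℝ) : Prop :=
  (∀ e, q e ∈ Set.Icc (lb E p e) (ub E p e)) ∧ ∀ e ∈ E, q e = - q (Prod.swap e)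


variable {E} {p}

lemma lb_le_ub (e : V × V) : lb E p e ≤ ub E p e := by
  classical
  unfold lb ub
  split_ifs
  · exact le_refl _
  · linarith
  · exact le_refl _

lemma not_mem_bounds {e : V × V} (he : e ∉ E) : lb E p e = 0 ∧ ub E p e = 0 := by
  classical
  unfold lb ub
  simp [he]

lemma bounds_of_not_intl {e : V × V} (he : e ∈ E) (hni : ¬ Intl (p e)) :
    lb E p e = (⌊p e⌋ : ℝ) ∧ ub E p e = (⌊p e⌋ : ℝ) + 1 := by
  classical
  unfold lb ub
  simp [he, hni]

lemma bounds_of_intl {e : V × V} (he : e ∈ E) (hi : Intl (p e)) :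
    lb E p e = p e ∧ ub E p e = p e := by
  classical
  unfold lb ub
  simp [he, hi]

lemma good_frac_mem {q : V × V → ℝ} (hq : Good E p q) {e : V × V}
    (hni : ¬ Intl (q e)) : e ∈ E ∧ ¬ Intl (p e) := by
  classical
  by_cases he : e ∈ E
  · refine ⟨he, fun hi => hni ?_⟩
    have h := hq.1 e
    rw [(bounds_of_intl he hi).1, (bounds_of_intl he hi).2] at h
    have : q e = p e := le_antisymm h.2 h.1
    rwa [this]
  · exfalso
    have h := hq.1 e
    rw [(not_mem_bounds he).1, (not_mem_bounds he).2] at h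
    exact hni (by rw [le_antisymm h.2 h.1]; exact ⟨0, by simp⟩)

lemma intl_ub {q : V × V → ℝ} (hq : Good E p q) {e : V × V} (hni : ¬ Intl (q e)) :
    Intl (ub E p e) := by
  obtain ⟨he, hnp⟩ := good_frac_mem hq hni
  rw [(bounds_of_not_intl he hnp).2]
  exact ⟨⌊p e⌋ + 1, by push_cast; ring⟩

lemma lt_ub {q : V × V → ℝ} (hq : Good E p q) {e : V × V} (hni : ¬ Intl (q e)) :
    q e < ub E p e := by
  rcases lt_or_eq_of_le (hq.1 e).2 with h | h
  · exact h
  · exact absurd (h ▸ intl_ub hq hni) hni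

lemma intl_in_bounds {q : V × V → ℝ} (hq : Good E p q) {e : V × V} (he : e ∈ E)
    (hi : Intl (q e)) : q e = (⌊p e⌋ : ℝ) ∨ q e = (⌊p e⌋ : ℝ) + 1 := by
  by_cases hip : Intl (p e)
  · left
    have hb := hq.1 e
    rw [(bounds_of_intl he hip).1, (bounds_of_intl he hip).2] at hb
    have hqe : q e = p e := le_antisymm hb.2 hb.1
    obtain ⟨n, hn⟩ := hip
    rw [hqe, hn, Int.floor_intCast]
  · obtain ⟨m, hm⟩ := hi
    have hb := hq.1 e
    rw [(bounds_of_not_intl he hip).1, (bounds_of_not_intl he hip).2, hm] at hb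
    have h1 : ⌊p e⌋ ≤ m := by exact_mod_cast hb.1
    have h2 : m ≤ ⌊p e⌋ + 1 := by exact_mod_cast hb.2
    rcases eq_or_lt_of_le h1 with h | h
    · left; rw [hm, ← h]
    · right
      have : m = ⌊p e⌋ + 1 := by omega
      rw [hm, this]
      push_cast
      ring

variable (hsym : ∀ e ∈ E, Prod.swap e ∈ E) (hp : ∀ e ∈ E, p e = - p (Prod.swap e))
include hsym hp

lemma lb_swap {e : V × V} (he : e ∈ E) : lb E p (Prod.swap e) = - ub E p e := by
  classical
  have hse : Prod.swap e ∈ E := hsym e he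
  have hpe : p (Prod.swap e) = - p e := by
    have := hp e he; linarith
  by_cases hi : Intl (p e)
  · have hi' : Intl (p (Prod.swap e)) := hpe ▸ hi.neg
    rw [(bounds_of_intl hse hi').1, (bounds_of_intl he hi).2, hpe]
  · have hi' : ¬ Intl (p (Prod.swap e)) := fun h => hi (by
      have := h.neg; rwa [hpe, neg_neg] at this)
    rw [(bounds_of_not_intl hse hi').1, (bounds_of_not_intl he hi).2, hpe,
      floor_neg_of_not_intl hi]
    push_cast; ring

end Graph


section Kappa

variable {V : Type*} [DecidableEq V]

/-- Signed count of edge `e` in the edge list `pl`. -/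
def kap : List (V × V) → (V × V) → ℤ
  | [], _ => 0
  | d :: tl, e =>
      ((if d = e then 1 else 0) - (if d = Prod.swap e then 1 else 0)) + kap tl e

lemma kap_nil (e : V × V) : kap [] e = 0 := rfl

lemma kap_cons (d : V × V) (tl : List (V × V)) (e : V × V) :
    kap (d :: tl) e =
      ((if d = e then 1 else 0) - (if d = Prod.swap e then 1 else 0)) + kap tl e := rfl

lemma kap_swap (pl : List (V × V)) (e : V × V) :
    kap pl (Prod.swap e) = - kap pl e := by
  classical
  induction pl with
  | nil => simp [kap_nil]
  | cons d tl ih =>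
    rw [kap_cons, kap_cons, ih, Prod.swap_swap]
    ring

lemma kap_eq_zero {pl : List (V × V)} {e : V × V} (h1 : e ∉ pl)
    (h2 : Prod.swap e ∉ pl) : kap pl e = 0 := by
  classical
  induction pl with
  | nil => simp [kap_nil]
  | cons d tl ih =>
    rw [kap_cons]
    have hd1 : d ≠ e := fun h => h1 (h ▸ (List.mem_cons_self (a := d) (l := tl)))
    have hd2 : d ≠ Prod.swap e := fun h => h2 (h ▸ (List.mem_cons_self (a := d) (l := tl)))
    rw [if_neg hd1, if_neg hd2,
      ih (fun h => h1 (List.mem_cons_of_mem d h)) (fun h => h2 (List.mem_cons_of_mem d h))]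
    ring

lemma kap_eq_one {pl : List (V × V)} {e : V × V}
    (hpw : pl.Pairwise (fun a b => a ≠ b ∧ a ≠ Prod.swap b))
    (hnl : ∀ d ∈ pl, d.1 ≠ d.2) (he : e ∈ pl) : kap pl e = 1 := by
  classical
  induction pl with
  | nil => simp at he
  | cons d tl ih =>
    rw [List.pairwise_cons] at hpw
    rcases List.mem_cons.1 he with rfl | he'
    · -- e is the head
      have h2 : e ≠ Prod.swap e := by
        intro h
        exact hnl e ((List.mem_cons_self (a := e) (l := tl))) (by
          have := congrArg Prod.fst h; simpa using this)
      have h3 : e ∉ tl := fun h => (hpw.1 e h).1 rfl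
      have h4 : Prod.swap e ∉ tl := by
        intro h
        have := (hpw.1 (Prod.swap e) h).2
        simp at this
      rw [kap_cons, if_pos rfl, if_neg h2, kap_eq_zero h3 h4]
      ring
    · -- e in the tail
      have hd1 : d ≠ e := (hpw.1 e he').1
      have hd2 : d ≠ Prod.swap e := (hpw.1 e he').2
      rw [kap_cons, if_neg hd1, if_neg hd2,
        ih hpw.2 (fun x hx => hnl x (List.mem_cons_of_mem d hx)) he']
      ring

lemma kap_sum_indicator {s : Finset V} {v : V} :
    ∀ pl : List (V × V),
      (∀ d ∈ pl, (d.1 = v → d.2 ∈ s) ∧ (d.2 = v → d.1 ∈ s)) →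
      ∑ w ∈ s, kap pl (v, w) =
        (pl.map (fun d => ((if d.1 = v then 1 else 0) - (if d.2 = v then 1 else 0) : ℤ))).sum := by
  classical
  intro pl
  induction pl with
  | nil => intro _; simp [kap_nil]
  | cons d tl ih =>
    intro hmem
    have hih := ih (fun x hx => hmem x (List.mem_cons_of_mem d hx))
    simp only [List.map_cons, List.sum_cons]
    have : ∑ w ∈ s, kap (d :: tl) (v, w)
        = ∑ w ∈ s, (((if d = (v, w) then 1 else 0) - (if d = (w, v) then 1 else 0) : ℤ)
            + kap tl (v, w)) := by
      refine Finset.sum_congr rfl fun w _ => ?_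
      rw [kap_cons]; rfl
    rw [this, Finset.sum_add_distrib, hih, Finset.sum_sub_distrib]
    congr 1
    congr 1
    · -- ∑ w ∈ s, if d = (v, w) then 1 else 0 = if d.1 = v then 1 else 0
      by_cases h : d.1 = v
      · have : ∀ w, (d = (v, w)) ↔ (w = d.2) := by
          intro w
          constructor
          · intro he; rw [he]
          · intro he; rw [he, ← h]
        rw [if_pos h]
        rw [Finset.sum_congr rfl fun w _ => by rw [if_congr (this w) rfl rfl]]
        rw [Finset.sum_ite_eq' s d.2 (fun _ => (1 : ℤ))]
        rw [if_pos ((hmem d ((List.mem_cons_self (a := d) (l := tl)))).1 h)]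
      · rw [if_neg h]
        refine Finset.sum_eq_zero fun w _ => ?_
        rw [if_neg (fun he => h (by rw [he]))]
    · by_cases h : d.2 = v
      · have : ∀ w, (d = (w, v)) ↔ (w = d.1) := by
          intro w
          constructor
          · intro he; rw [he]
          · intro he; rw [he, ← h]
        rw [if_pos h]
        rw [Finset.sum_congr rfl fun w _ => by rw [if_congr (this w) rfl rfl]]
        rw [Finset.sum_ite_eq' s d.1 (fun _ => (1 : ℤ))]
        rw [if_pos ((hmem d ((List.mem_cons_self (a := d) (l := tl)))).2 h)]
      · rw [if_neg h]
        refine Finset.sum_eq_zero fun w _ => ?_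
        rw [if_neg (fun he => h (by rw [he]))]

/-- Telescoping: the boundary of a walk. -/
lemma walk_boundary (v : V) :
    ∀ (x : V) (L : List V),
      (((x :: L).zip L).map
          (fun d => ((if d.1 = v then 1 else 0) - (if d.2 = v then 1 else 0) : ℤ))).sum
        = (if x = v then 1 else 0) - (if (x :: L).getLast (by simp) = v then 1 else 0) := by
  classical
  intro x L
  induction L generalizing x with
  | nil => exact (sub_self _).symm
  | cons y tl ih =>
    have : (x :: y :: tl).zip (y :: tl) = (x, y) :: ((y :: tl).zip tl) := rfl
    rw [this, List.map_cons, List.sum_cons, ih y]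
    have : (x :: y :: tl).getLast (by simp) = (y :: tl).getLast (by simp) := by
      rw [List.getLast_cons]
    rw [this]
    ring

end Kappa


section Push

variable {V : Type*} [DecidableEq V] {E : Set (V × V)} {p : V × V → ℝ} {R : V → ℤ}

lemma intl_diag {q : V × V → ℝ} (hq : Good E p q) (x : V) : Intl (q (x, x)) := by
  by_cases he : ((x, x) : V × V) ∈ E
  · have h := hq.2 (x, x) he
    have : q (x, x) = 0 := by
      have hsw : (Prod.swap (x, x) : V × V) = (x, x) := rfl
      rw [hsw] at h; linarith
    rw [this]; exact ⟨0, by simp⟩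
  · have h := hq.1 (x, x)
    rw [(not_mem_bounds he).1, (not_mem_bounds he).2] at h
    have : q (x, x) = 0 := le_antisymm h.2 h.1
    rw [this]; exact ⟨0, by simp⟩

lemma kap_trichotomy {q : V × V → ℝ} (hq : Good E p q) {pl : List (V × V)}
    (hmem : ∀ d ∈ pl, d ∈ E ∧ ¬ Intl (q d))
    (hpw : pl.Pairwise (fun a b => a ≠ b ∧ a ≠ Prod.swap b)) (e : V × V) :
    (kap pl e = 1 ∧ e ∈ pl) ∨ (kap pl e = -1 ∧ Prod.swap e ∈ pl) ∨ kap pl e = 0 := by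
  have hnl : ∀ d ∈ pl, d.1 ≠ d.2 := by
    intro d hd hdd
    refine (hmem d hd).2 ?_
    have : d = (d.1, d.1) := by
      ext
      · rfl
      · exact hdd.symm
    rw [this]
    exact intl_diag hq d.1
  by_cases h1 : e ∈ pl
  · exact Or.inl ⟨kap_eq_one hpw hnl h1, h1⟩
  by_cases h2 : Prod.swap e ∈ pl
  · refine Or.inr (Or.inl ⟨?_, h2⟩)
    have := kap_eq_one hpw hnl h2
    have hs := kap_swap pl e
    omega
  · exact Or.inr (Or.inr (kap_eq_zero h1 h2))

lemma push (hfin : ∀ v : V, {w | (v, w) ∈ E}.Finite)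
    (hsym : ∀ e ∈ E, Prod.swap e ∈ E) (hp : ∀ e ∈ E, p e = - p (Prod.swap e))
    {q : V × V → ℝ} {W : Finset V} {pl : List (V × V)} (hq : Good E p q)
    (hsums : ∀ v ∈ W, ∑ w ∈ (hfin v).toFinset, q (v, w) = (R v : ℝ))
    (hne : pl ≠ [])
    (hmem : ∀ d ∈ pl, d ∈ E ∧ ¬ Intl (q d))
    (hpw : pl.Pairwise (fun a b => a ≠ b ∧ a ≠ Prod.swap b))
    (hbal : ∀ v ∈ W, ∑ w ∈ (hfin v).toFinset, kap pl (v, w) = 0) :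
    ∃ q', Good E p q' ∧ (∀ v ∈ W, ∑ w ∈ (hfin v).toFinset, q' (v, w) = (R v : ℝ))
      ∧ (∀ e, Intl (q e) → Intl (q' e)) ∧ ∃ d ∈ pl, Intl (q' d) := by
  classical
  set T : Finset ℝ := pl.toFinset.image (fun d => ub E p d - q d) with hT
  have hTne : T.Nonempty := by
    obtain ⟨d0, hd0⟩ := List.exists_mem_of_ne_nil pl hne
    exact ⟨ub E p d0 - q d0, Finset.mem_image_of_mem _ (List.mem_toFinset.2 hd0)⟩
  set ε : ℝ := T.min' hTne with hε
  have hεle : ∀ d ∈ pl, ε ≤ ub E p d - q d := fun d hd =>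
    Finset.min'_le _ _ (Finset.mem_image_of_mem _ (List.mem_toFinset.2 hd))
  obtain ⟨dm, hdm, hdmeq⟩ : ∃ d ∈ pl, ub E p d - q d = ε := by
    obtain ⟨d, hd, hdeq⟩ := Finset.mem_image.1 (T.min'_mem hTne)
    exact ⟨d, List.mem_toFinset.1 hd, hdeq⟩
  have hεpos : 0 < ε := by
    rw [← hdmeq]
    have := lt_ub hq (hmem dm hdm).2
    linarith
  set q' : V × V → ℝ := fun e => q e + ε * (kap pl e : ℝ) with hq'
  have htri := kap_trichotomy hq hmem hpw
  have hgood : Good E p q' := by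
    constructor
    · intro e
      rcases htri e with ⟨hk, hin⟩ | ⟨hk, hin⟩ | hk
      · have hmm := hmem e hin
        have hb := hq.1 e
        constructor
        · simp only [hq', hk]
          push_cast
          linarith [hb.1]
        · simp only [hq', hk]
          push_cast
          linarith [hεle e hin]
      · have hmm := hmem (Prod.swap e) hin
        have heE : e ∈ E := by
          have := hsym _ hmm.1
          rwa [Prod.swap_swap] at this
        have hanti : q e = - q (Prod.swap e) := hq.2 e heE
        have hlb : lb E p e = - ub E p (Prod.swap e) := by
          have := lb_swap hsym hp hmm.1
          rwa [Prod.swap_swap] at this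
        constructor
        · simp only [hq', hk]
          push_cast
          rw [hlb, hanti]
          have := hεle _ hin
          linarith
        · simp only [hq', hk]
          push_cast
          linarith [(hq.1 e).2]
      · simp only [hq', hk]
        push_cast
        simpa using hq.1 e
    · intro e he
      have hse : Prod.swap e ∈ E := hsym e he
      simp only [hq']
      rw [kap_swap, hq.2 e he]
      push_cast
      ring
  refine ⟨q', hgood, ?_, ?_, ?_⟩
  · intro v hv
    simp only [hq']
    rw [Finset.sum_add_distrib, hsums v hv, ← Finset.mul_sum]
    have : ∑ w ∈ (hfin v).toFinset, ((kap pl (v, w) : ℝ))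
        = ((∑ w ∈ (hfin v).toFinset, kap pl (v, w) : ℤ) : ℝ) := by
      push_cast
      rfl
    rw [this, hbal v hv]
    simp
  · intro e hie
    rcases htri e with ⟨hk, hin⟩ | ⟨hk, hin⟩ | hk
    · exact absurd hie (hmem e hin).2
    · exfalso
      have hmm := hmem (Prod.swap e) hin
      have hanti : q (Prod.swap e) = - q e := by
        have := hq.2 (Prod.swap e) hmm.1
        rwa [Prod.swap_swap] at this
      exact hmm.2 (hanti ▸ hie.neg)
    · simp only [hq', hk]
      push_cast
      simpa using hie
  · refine ⟨dm, hdm, ?_⟩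
    have hk : kap pl dm = 1 := by
      rcases htri dm with ⟨hk, _⟩ | ⟨hk, hin⟩ | hk
      · exact hk
      · exfalso
        rcases List.mem_cons.2 (Or.inl rfl) with _
        -- dm ∈ pl and swap dm ∈ pl cannot both hold; derive via pairwise
        have h1 := kap_eq_one hpw (by
          intro d hd hdd
          refine (hmem d hd).2 ?_
          have : d = (d.1, d.1) := by
            ext
            · rfl
            · exact hdd.symm
          rw [this]
          exact intl_diag hq d.1) hdm
        omega
      · exfalso
        have h1 := kap_eq_one hpw (by
          intro d hd hdd
          refine (hmem d hd).2 ?_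
          have : d = (d.1, d.1) := by
            ext
            · rfl
            · exact hdd.symm
          rw [this]
          exact intl_diag hq d.1) hdm
        omega
    have : q' dm = ub E p dm := by
      simp only [hq', hk]
      push_cast
      linarith [hdmeq]
    rw [this]
    exact intl_ub hq (hmem dm hdm).2

end Push


section Walk

variable {V : Type*} [DecidableEq V] {E : Set (V × V)} {p : V × V → ℝ} {R : V → ℤ}

/-- At a constrained vertex, a fractional edge has a fractional sibling. -/
lemma branch (hfin : ∀ v : V, {w | (v, w) ∈ E}.Finite) {q : V × V → ℝ} {v u : V}
    (hvsum : ∑ w ∈ (hfin v).toFinset, q (v, w) = (R v : ℝ))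
    (hu : (v, u) ∈ E) (hni : ¬ Intl (q (v, u))) :
    ∃ w, w ≠ u ∧ (v, w) ∈ E ∧ ¬ Intl (q (v, w)) := by
  by_contra hcon
  push_neg at hcon
  have hu' : u ∈ (hfin v).toFinset := (hfin v).mem_toFinset.2 hu
  have hrest : Intl (∑ w ∈ ((hfin v).toFinset).erase u, q (v, w)) := by
    refine intl_sum fun w hw => ?_
    have hwne : w ≠ u := Finset.ne_of_mem_erase hw
    have hwE : (v, w) ∈ E := (hfin v).mem_toFinset.1 (Finset.mem_of_mem_erase hw)
    exact hcon w hwne hwE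
  have hsplit : q (v, u) + ∑ w ∈ ((hfin v).toFinset).erase u, q (v, w)
      = ∑ w ∈ (hfin v).toFinset, q (v, w) := Finset.add_sum_erase _ (fun w => q (v, w)) hu'
  refine hni ?_
  have : q (v, u) = (R v : ℝ) - ∑ w ∈ ((hfin v).toFinset).erase u, q (v, w) := by
    rw [← hvsum]; linarith
  rw [this]
  exact (intl_intCast (R v)).sub hrest

lemma zip_mem_chain' {R' : V → V → Prop} :
    ∀ {L : List V}, List.Chain' R' L → ∀ pr ∈ L.zip L.tail, R' pr.1 pr.2 := by
  intro L
  induction L with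
  | nil => intro _ pr hpr; simp at hpr
  | cons x tl ih =>
    intro hch pr hpr
    cases tl with
    | nil => simp at hpr
    | cons y tl' =>
      have : (x :: y :: tl').zip (x :: y :: tl').tail
          = (x, y) :: ((y :: tl').zip (y :: tl').tail) := rfl
      rw [this] at hpr
      rcases List.mem_cons.1 hpr with rfl | h
      · exact (List.isChain_cons_cons.1 hch).1
      · exact ih (List.isChain_cons_cons.1 hch).2 pr h

lemma zip_length {L : List V} : (L.zip L.tail).length = L.length - 1 := by
  rw [List.length_zip, List.length_tail]
  omega

lemma zip_getElem {L : List V} {i : ℕ} (hi : i < (L.zip L.tail).length) :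
    (L.zip L.tail)[i] =
      (L[i]'(by rw [zip_length] at hi; omega),
       L[i+1]'(by rw [zip_length] at hi; omega)) := by
  rw [List.getElem_zip]
  congr 1
  rw [List.getElem_tail]

/-- Pairwise distinctness of edges along a vertex-disjoint path. -/
lemma pairwise_zip_of_nodup {L : List V} (h : L.Nodup) :
    (L.zip L.tail).Pairwise (fun a b => a ≠ b ∧ a ≠ Prod.swap b) := by
  rw [List.pairwise_iff_getElem]
  intro i j hi hj hij
  rw [zip_getElem hi, zip_getElem hj]
  have hlen : (L.zip L.tail).length = L.length - 1 := zip_length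
  have hinj : ∀ (a b : ℕ) (ha : a < L.length) (hb : b < L.length),
      L[a] = L[b] → a = b := fun a b ha hb hab =>
    h.getElem_inj_iff.1 hab
  constructor
  · intro hcon
    rw [Prod.ext_iff] at hcon
    have := hinj i j (by omega) (by omega) hcon.1
    omega
  · intro hcon
    rw [Prod.ext_iff] at hcon
    have := hinj i (j+1) (by omega) (by omega) hcon.1
    omega

/-- Pairwise distinctness of edges along a cycle of length ≥ 3. -/
lemma pairwise_zip_cycle {x : V} {cyc : List V} (hx : cyc.head? = some x)
    (h : cyc.Nodup) (hlen : 3 ≤ cyc.length) :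
    (((cyc ++ [x]).zip (cyc ++ [x]).tail)).Pairwise (fun a b => a ≠ b ∧ a ≠ Prod.swap b) := by
  have hcl : (cyc ++ [x]).length = cyc.length + 1 := by simp
  have hx0 : ∀ (h0 : 0 < cyc.length), cyc[0] = x := by
    intro h0
    cases cyc with
    | nil => simp at hlen
    | cons a tl => simp at hx; simp [hx]
  have hinj : ∀ (a b : ℕ) (ha : a < cyc.length) (hb : b < cyc.length),
      cyc[a] = cyc[b] → a = b := fun a b ha hb hab => h.getElem_inj_iff.1 hab
  have hget : ∀ (i : ℕ) (hi : i < (cyc ++ [x]).length) (him : i % cyc.length < cyc.length),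
      (cyc ++ [x])[i] = cyc[i % cyc.length] := by
    intro i hi him
    rcases Nat.lt_or_ge i cyc.length with h' | h'
    · rw [List.getElem_append_left h']
      congr 1
      exact (Nat.mod_eq_of_lt h').symm
    · have hieq : i = cyc.length := by omega
      subst hieq
      rw [List.getElem_append_right (le_refl _)]
      simp only [Nat.sub_self, List.getElem_singleton, Nat.mod_self]
      exact (hx0 (by omega)).symm
  have key : ∀ (a b : ℕ) (haL : a < (cyc ++ [x]).length) (hbL : b < (cyc ++ [x]).length),
      a < cyc.length → b ≤ cyc.length
      → (cyc ++ [x])[a] = (cyc ++ [x])[b] → a = b ∨ (a = 0 ∧ b = cyc.length) := by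
    intro a b haL hbL ha hb hab
    rw [hget a haL (Nat.mod_lt _ (by omega)), hget b hbL (Nat.mod_lt _ (by omega))] at hab
    have := hinj _ _ (Nat.mod_lt _ (by omega)) (Nat.mod_lt _ (by omega)) hab
    rw [Nat.mod_eq_of_lt ha] at this
    rcases Nat.lt_or_ge b cyc.length with h' | h'
    · rw [Nat.mod_eq_of_lt h'] at this
      omega
    · have hbc : b = cyc.length := by omega
      subst hbc
      rw [Nat.mod_self] at this
      omega
  rw [List.pairwise_iff_getElem]
  intro i j hi hj hij
  rw [zip_getElem hi, zip_getElem hj]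
  rw [zip_length] at hi hj
  have hiL : i < cyc.length := by omega
  have hjL : j < cyc.length := by omega
  constructor
  · intro hcon
    rw [Prod.ext_iff] at hcon
    rcases key i j (by omega) (by omega) hiL (by omega) hcon.1 with h1 | ⟨h1, h2⟩
    · omega
    · omega
  · intro hcon
    rw [Prod.ext_iff] at hcon
    simp only [Prod.fst_swap, Prod.snd_swap] at hcon
    rcases key i (j+1) (by omega) (by omega) hiL (by omega) hcon.1 with h1 | ⟨h1, h2⟩
    · omega
    · rcases key (i+1) j (by omega) (by omega) (by omega) (by omega) hcon.2 with h3 | ⟨h3, h4⟩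
      · omega
      · omega

end Walk


section PL

variable {V : Type*} [DecidableEq V] {E : Set (V × V)} {p : V × V → ℝ} {R : V → ℤ}

/-- A valid "push input": a nonempty list of fractional edges touching `W`,
pairwise distinct as undirected edges, balanced at every vertex of `W`. -/
def PLok (E : Set (V × V)) (q : V × V → ℝ) (W : Finset V)
    (hfin : ∀ v : V, {w | (v, w) ∈ E}.Finite) (pl : List (V × V)) : Prop :=
  pl ≠ [] ∧ (∀ d ∈ pl, (d ∈ E ∧ ¬ Intl (q d)) ∧ (d.1 ∈ W ∨ d.2 ∈ W)) ∧
  pl.Pairwise (fun a b => a ≠ b ∧ a ≠ Prod.swap b) ∧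
  ∀ v ∈ W, ∑ w ∈ (hfin v).toFinset, kap pl (v, w) = 0

lemma balance_of_walk (hfin : ∀ v : V, {w | (v, w) ∈ E}.Finite)
    (hsym : ∀ e ∈ E, Prod.swap e ∈ E) {q : V × V → ℝ} {W : Finset V} {L : List V}
    (hL2 : 2 ≤ L.length)
    (hch : List.Chain' (fun a b => (a, b) ∈ E ∧ ¬ Intl (q (a, b))) L)
    (hbd : L.head? = L.getLast? ∨ (∀ v ∈ W, L.head? ≠ some v ∧ L.getLast? ≠ some v)) :
    ∀ v ∈ W, ∑ w ∈ (hfin v).toFinset, kap (L.zip L.tail) (v, w) = 0 := by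
  intro v hv
  have hmem : ∀ d ∈ L.zip L.tail, (d.1 = v → d.2 ∈ (hfin v).toFinset) ∧
      (d.2 = v → d.1 ∈ (hfin v).toFinset) := by
    intro d hd
    have hdE : (d.1, d.2) ∈ E := (zip_mem_chain' hch d hd).1
    constructor
    · intro h1
      rw [(hfin v).mem_toFinset]
      rw [h1] at hdE
      exact hdE
    · intro h2
      rw [(hfin v).mem_toFinset]
      have := hsym _ hdE
      rw [h2] at this
      exact this
  have hzip : ∀ w, ((v, w) : V × V) = (v, w) := fun _ => rfl
  rw [kap_sum_indicator _ hmem]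
  cases L with
  | nil => simp at hL2
  | cons x xs =>
    have hb := walk_boundary v x xs
    have htl : (x :: xs).tail = xs := rfl
    rw [htl, hb]
    have hlast : (x :: xs).getLast? = some ((x :: xs).getLast (by simp)) := by
      rw [List.getLast?_eq_getLast]
    have hhead : (x :: xs).head? = some x := rfl
    rcases hbd with h | h
    · rw [hhead, hlast] at h
      have : x = (x :: xs).getLast (by simp) := by
        injection h
      rw [← this]
      ring
    · obtain ⟨h1, h2⟩ := h v hv
      rw [hhead] at h1
      rw [hlast] at h2
      have hx : x ≠ v := fun he => h1 (by rw [he])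
      have hy : (x :: xs).getLast (by simp) ≠ v := fun he => h2 (by rw [he])
      rw [if_neg hx, if_neg hy]
      ring

lemma plok_path (hfin : ∀ v : V, {w | (v, w) ∈ E}.Finite)
    (hsym : ∀ e ∈ E, Prod.swap e ∈ E) {q : V × V → ℝ} {W : Finset V} {L : List V}
    (hL2 : 2 ≤ L.length) (hnd : L.Nodup)
    (hch : List.Chain' (fun a b => (a, b) ∈ E ∧ ¬ Intl (q (a, b))) L)
    (htch : List.Chain' (fun a b => a ∈ W ∨ b ∈ W) L)
    (hhead : ∀ v ∈ W, L.head? ≠ some v) (hlast : ∀ v ∈ W, L.getLast? ≠ some v) :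
    PLok E q W hfin (L.zip L.tail) := by
  refine ⟨?_, ?_, pairwise_zip_of_nodup hnd, balance_of_walk hfin hsym hL2 hch
    (Or.inr fun v hv => ⟨hhead v hv, hlast v hv⟩)⟩
  · have := zip_length (L := L)
    intro hcon
    rw [hcon] at this
    simp at this
    omega
  · intro d hd
    exact ⟨zip_mem_chain' hch d hd, zip_mem_chain' htch d hd⟩

lemma plok_cycle (hfin : ∀ v : V, {w | (v, w) ∈ E}.Finite)
    (hsym : ∀ e ∈ E, Prod.swap e ∈ E) {q : V × V → ℝ} {W : Finset V} {x : V} {cyc : List V}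
    (hx : cyc.head? = some x) (hnd : cyc.Nodup) (hlen : 3 ≤ cyc.length)
    (hch : List.Chain' (fun a b => (a, b) ∈ E ∧ ¬ Intl (q (a, b))) (cyc ++ [x]))
    (htch : List.Chain' (fun a b => a ∈ W ∨ b ∈ W) (cyc ++ [x])) :
    PLok E q W hfin ((cyc ++ [x]).zip (cyc ++ [x]).tail) := by
  have hcne : cyc ≠ [] := by
    intro h; rw [h] at hlen; simp at hlen
  refine ⟨?_, ?_, pairwise_zip_cycle hx hnd hlen, balance_of_walk hfin hsym (by
      simp; omega) hch (Or.inl ?_)⟩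
  · have := zip_length (L := cyc ++ [x])
    intro hcon
    rw [hcon] at this
    simp at this
    omega
  · intro d hd
    exact ⟨zip_mem_chain' hch d hd, zip_mem_chain' htch d hd⟩
  · rw [List.head?_append_of_ne_nil _ hcne, List.getLast?_append, hx]
    simp

end PL


section Extend

variable {V : Type*} [DecidableEq V] {E : Set (V × V)} {p : V × V → ℝ} {R : V → ℤ}

lemma edge_symm (hsym : ∀ e ∈ E, Prod.swap e ∈ E) {q : V × V → ℝ} (hq : Good E p q)
    {a b : V} (h : (a, b) ∈ E ∧ ¬ Intl (q (a, b))) : (b, a) ∈ E ∧ ¬ Intl (q (b, a)) := by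
  have hba : ((b, a) : V × V) ∈ E := hsym _ h.1
  refine ⟨hba, fun hi => h.2 ?_⟩
  have : q (b, a) = - q (a, b) := hq.2 (b, a) hba
  rw [this] at hi
  simpa using hi.neg

lemma extend_walk (hfin : ∀ v : V, {w | (v, w) ∈ E}.Finite)
    (hsym : ∀ e ∈ E, Prod.swap e ∈ E) {q : V × V → ℝ} (hq : Good E p q) {W : Finset V}
    (hsums : ∀ v ∈ W, ∑ w ∈ (hfin v).toFinset, q (v, w) = (R v : ℝ)) :
    ∀ (k : ℕ) (r : List V), (W \ r.toFinset).card = k → r.Nodup → 2 ≤ r.length →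
    List.Chain' (fun a b => (b, a) ∈ E ∧ ¬ Intl (q (b, a))) r →
    List.Chain' (fun a b => a ∈ W ∨ b ∈ W) r →
    (∃ pl, PLok E q W hfin pl) ∨
    (∃ r' : List V, r'.Nodup ∧ 2 ≤ r'.length ∧
      List.Chain' (fun a b => (b, a) ∈ E ∧ ¬ Intl (q (b, a))) r' ∧
      List.Chain' (fun a b => a ∈ W ∨ b ∈ W) r' ∧
      (∀ v ∈ W, r'.head? ≠ some v) ∧ r'.getLast? = r.getLast?) := by
  intro k
  induction k using Nat.strong_induction_on with
  | _ k ih =>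
  intro r hcard hnd hlen hch htch
  rcases r with _ | ⟨v, r1⟩
  · simp at hlen
  rcases r1 with _ | ⟨u, rest⟩
  · simp at hlen
  by_cases hvW : v ∈ W
  swap
  · -- the current end is already outside W
    refine Or.inr ⟨v :: u :: rest, hnd, hlen, hch, htch, ?_, rfl⟩
    intro v' hv' hcon
    simp only [List.head?_cons, Option.some.injEq] at hcon
    exact hvW (hcon ▸ hv')
  · have huv : (u, v) ∈ E ∧ ¬ Intl (q (u, v)) := (List.isChain_cons_cons.1 hch).1
    have hvu : (v, u) ∈ E ∧ ¬ Intl (q (v, u)) := edge_symm hsym hq huv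
    obtain ⟨w, hwne, hwE, hwni⟩ := branch hfin (hsums v hvW) hvu.1 hvu.2
    have hwv : w ≠ v := by
      intro h
      subst h
      exact hwni (intl_diag hq w)
    by_cases hwr : w ∈ v :: u :: rest
    · -- closure: we found a cycle
      have hwrest : w ∈ rest := by
        rcases List.mem_cons.1 hwr with h | h
        · exact absurd h hwv
        rcases List.mem_cons.1 h with h' | h'
        · exact absurd h' hwne
        · exact h'
      obtain ⟨s', t, hst⟩ := List.append_of_mem hwrest
      -- r = (v :: u :: s') ++ w :: t
      have hreq : v :: u :: rest = ((v :: u :: s') ++ [w]) ++ t := by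
        rw [hst]; simp
      set rc : List V := (v :: u :: s') ++ [w] with hrc
      have hndrc : rc.Nodup := by
        have := hreq ▸ hnd
        exact this.of_append_left
      have hchrc : List.Chain' (fun a b => (b, a) ∈ E ∧ ¬ Intl (q (b, a))) rc := by
        have := hreq ▸ hch
        exact (List.isChain_append.1 this).1
      have htchrc : List.Chain' (fun a b => a ∈ W ∨ b ∈ W) rc := by
        have := hreq ▸ htch
        exact (List.isChain_append.1 this).1
      set cyc : List V := rc.reverse with hcyc
      have hx : cyc.head? = some w := by
        rw [hcyc, List.head?_reverse, hrc, List.getLast?_append]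
        simp
      have hndc : cyc.Nodup := List.nodup_reverse.2 hndrc
      have hlenc : 3 ≤ cyc.length := by
        rw [hcyc, List.length_reverse, hrc]
        simp
      have hchc : List.Chain' (fun a b => (a, b) ∈ E ∧ ¬ Intl (q (a, b))) cyc := by
        rw [hcyc, List.Chain', List.isChain_reverse]
        exact hchrc
      have htchc : List.Chain' (fun a b => a ∈ W ∨ b ∈ W) cyc := by
        rw [hcyc, List.Chain', List.isChain_reverse]
        exact htchrc.imp fun a b h => h.symm
      have hlastc : cyc.getLast? = some v := by
        rw [hcyc, List.getLast?_reverse, hrc]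
        rfl
      have hchfull : List.Chain' (fun a b => (a, b) ∈ E ∧ ¬ Intl (q (a, b))) (cyc ++ [w]) := by
        rw [List.Chain', List.isChain_append]
        refine ⟨hchc, List.isChain_singleton w, ?_⟩
        intro a ha b hb
        rw [hlastc] at ha
        simp at ha hb
        subst ha; subst hb
        exact ⟨hwE, hwni⟩
      have htchfull : List.Chain' (fun a b => a ∈ W ∨ b ∈ W) (cyc ++ [w]) := by
        rw [List.Chain', List.isChain_append]
        refine ⟨htchc, List.isChain_singleton w, ?_⟩
        intro a ha b hb
        rw [hlastc] at ha
        simp at ha hb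
        subst ha; subst hb
        exact Or.inl hvW
      exact Or.inl ⟨_, plok_cycle hfin hsym hx hndc hlenc hchfull htchfull⟩
    · -- extend the walk by w
      have hnd' : (w :: v :: u :: rest).Nodup := List.nodup_cons.2 ⟨hwr, hnd⟩
      have hch' : List.Chain' (fun a b => (b, a) ∈ E ∧ ¬ Intl (q (b, a)))
          (w :: v :: u :: rest) := List.isChain_cons_cons.2 ⟨⟨hwE, hwni⟩, hch⟩
      have htch' : List.Chain' (fun a b => a ∈ W ∨ b ∈ W) (w :: v :: u :: rest) :=
        List.isChain_cons_cons.2 ⟨Or.inr hvW, htch⟩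
      have hlast' : (w :: v :: u :: rest).getLast? = (v :: u :: rest).getLast? := by
        rw [List.getLast?_cons_cons]
      by_cases hwW : w ∈ W
      · -- recurse with a strictly smaller measure
        have hwdiff : w ∈ W \ (v :: u :: rest).toFinset := by
          rw [Finset.mem_sdiff]
          exact ⟨hwW, fun h => hwr (List.mem_toFinset.1 h)⟩
        have hdiffeq : W \ (w :: v :: u :: rest).toFinset
            = (W \ (v :: u :: rest).toFinset).erase w := by
          ext a
          simp only [Finset.mem_sdiff, Finset.mem_erase, List.toFinset_cons,
            Finset.mem_insert, List.mem_toFinset, List.mem_cons, not_or]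
          tauto
        have hlt : (W \ (w :: v :: u :: rest).toFinset).card < k := by
          rw [hdiffeq, ← hcard]
          exact Finset.card_erase_lt_of_mem hwdiff
        rcases ih _ hlt (w :: v :: u :: rest) rfl hnd' (by simp) hch' htch' with h | h
        · exact Or.inl h
        · obtain ⟨r', h1, h2, h3, h4, h5, h6⟩ := h
          exact Or.inr ⟨r', h1, h2, h3, h4, h5, by rw [h6, hlast']⟩
      · -- the new endpoint is outside W : done
        refine Or.inr ⟨w :: v :: u :: rest, hnd', by simp, hch', htch', ?_, hlast'⟩
        intro v' hv' hcon
        simp only [List.head?_cons, Option.some.injEq] at hcon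
        exact hwW (hcon ▸ hv')

end Extend


section Reduce

attribute [local instance] Classical.propDecidable

variable {V : Type*} [DecidableEq V] {E : Set (V × V)} {p : V × V → ℝ} {R : V → ℤ}

lemma find_plok (hfin : ∀ v : V, {w | (v, w) ∈ E}.Finite)
    (hsym : ∀ e ∈ E, Prod.swap e ∈ E) {q : V × V → ℝ} (hq : Good E p q) {W : Finset V}
    (hsums : ∀ v ∈ W, ∑ w ∈ (hfin v).toFinset, q (v, w) = (R v : ℝ))
    {e0 : V × V} (he0 : e0 ∈ E) (hni : ¬ Intl (q e0)) (htc : e0.1 ∈ W ∨ e0.2 ∈ W) :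
    ∃ pl, PLok E q W hfin pl := by
  obtain ⟨a, b⟩ := e0
  simp only at htc
  have hab : a ≠ b := by
    intro h
    subst h
    exact hni (intl_diag hq a)
  have hnd0 : ([b, a] : List V).Nodup := by simp [Ne.symm hab]
  have hch0 : List.Chain' (fun x y => (y, x) ∈ E ∧ ¬ Intl (q (y, x))) [b, a] := by
    rw [List.Chain', List.isChain_cons_cons]
    exact ⟨⟨he0, hni⟩, List.isChain_singleton a⟩
  have htch0 : List.Chain' (fun x y => x ∈ W ∨ y ∈ W) [b, a] := by
    rw [List.Chain', List.isChain_cons_cons]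
    exact ⟨htc.symm, List.isChain_singleton a⟩
  rcases extend_walk hfin hsym hq hsums _ [b, a] rfl hnd0 (by simp) hch0 htch0 with h | h
  · exact h
  obtain ⟨r1, hnd1, hlen1, hch1, htch1, hhead1, hlast1⟩ := h
  -- extend from the other end
  have hnd2 : r1.reverse.Nodup := List.nodup_reverse.2 hnd1
  have hlen2 : 2 ≤ r1.reverse.length := by rwa [List.length_reverse]
  have hch2 : List.Chain' (fun x y => (y, x) ∈ E ∧ ¬ Intl (q (y, x))) r1.reverse := by
    rw [List.Chain', List.isChain_reverse]
    exact hch1.imp fun x y h => edge_symm hsym hq h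
  have htch2 : List.Chain' (fun x y => x ∈ W ∨ y ∈ W) r1.reverse := by
    rw [List.Chain', List.isChain_reverse]
    exact htch1.imp fun x y h => h.symm
  rcases extend_walk hfin hsym hq hsums _ r1.reverse rfl hnd2 hlen2 hch2 htch2 with h | h
  · exact h
  obtain ⟨r3, hnd3, hlen3, hch3, htch3, hhead3, hlast3⟩ := h
  -- r3 reversed is a forward walk with both endpoints outside W
  refine ⟨_, plok_path hfin hsym (L := r3.reverse) (by rwa [List.length_reverse])
    (List.nodup_reverse.2 hnd3) ?_ ?_ ?_ ?_⟩
  · rw [List.Chain', List.isChain_reverse]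
    exact hch3
  · rw [List.Chain', List.isChain_reverse]
    exact htch3.imp fun x y h => h.symm
  · intro v hv
    rw [List.head?_reverse, hlast3, List.getLast?_reverse]
    exact hhead1 v hv
  · intro v hv
    rw [List.getLast?_reverse]
    exact hhead3 v hv

/-- The finite set of edges of `E` touching the finite vertex set `W`. -/
noncomputable def touchF (hfin : ∀ v : V, {w | (v, w) ∈ E}.Finite) (W : Finset V) :
    Finset (V × V) :=
  (W.biUnion fun v => (hfin v).toFinset.image fun w => ((v, w) : V × V)) ∪
  ((W.biUnion fun v => (hfin v).toFinset.image fun w => ((v, w) : V × V)).image Prod.swap)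

lemma mem_touchF (hfin : ∀ v : V, {w | (v, w) ∈ E}.Finite)
    (hsym : ∀ e ∈ E, Prod.swap e ∈ E) {W : Finset V} {e : V × V} :
    e ∈ touchF hfin W ↔ e ∈ E ∧ (e.1 ∈ W ∨ e.2 ∈ W) := by
  unfold touchF
  simp only [Finset.mem_union, Finset.mem_biUnion, Finset.mem_image,
    Set.Finite.mem_toFinset, Set.mem_setOf_eq]
  constructor
  · rintro (⟨v, hv, w, hw, rfl⟩ | ⟨d, ⟨v, hv, w, hw, rfl⟩, rfl⟩)
    · exact ⟨hw, Or.inl hv⟩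
    · exact ⟨hsym _ hw, Or.inr hv⟩
  · rintro ⟨he, hvw | hvw⟩
    · exact Or.inl ⟨e.1, hvw, e.2, he, rfl⟩
    · refine Or.inr ⟨Prod.swap e, ⟨e.2, hvw, e.1, hsym _ he, rfl⟩, Prod.swap_swap e⟩

lemma reduce (hfin : ∀ v : V, {w | (v, w) ∈ E}.Finite)
    (hsym : ∀ e ∈ E, Prod.swap e ∈ E) (hp : ∀ e ∈ E, p e = - p (Prod.swap e))
    {W : Finset V} :
    ∀ (n : ℕ) (q : V × V → ℝ), Good E p q →
    (∀ v ∈ W, ∑ w ∈ (hfin v).toFinset, q (v, w) = (R v : ℝ)) →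
    (Finset.filter (fun e => ¬ Intl (q e)) (touchF hfin W)).card ≤ n →
    ∃ q', Good E p q' ∧ (∀ v ∈ W, ∑ w ∈ (hfin v).toFinset, q' (v, w) = (R v : ℝ)) ∧
      ∀ e ∈ touchF hfin W, Intl (q' e) := by
  intro n
  induction n with
  | zero =>
    intro q hq hsums hcard
    refine ⟨q, hq, hsums, fun e he => ?_⟩
    by_contra hni
    have : e ∈ Finset.filter (fun e => ¬ Intl (q e)) (touchF hfin W) := Finset.mem_filter.2 ⟨he, hni⟩
    have := Finset.card_pos.2 ⟨e, this⟩
    omega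
  | succ n ihn =>
    intro q hq hsums hcard
    by_cases hemp : (Finset.filter (fun e => ¬ Intl (q e)) (touchF hfin W)) = ∅
    · refine ⟨q, hq, hsums, fun e he => ?_⟩
      by_contra hni
      have : e ∈ Finset.filter (fun e => ¬ Intl (q e)) (touchF hfin W) := Finset.mem_filter.2 ⟨he, hni⟩
      rw [hemp] at this
      simp at this
    · obtain ⟨e0, he0⟩ := Finset.nonempty_iff_ne_empty.2 hemp
      obtain ⟨he0F, he0ni⟩ := Finset.mem_filter.1 he0
      obtain ⟨he0E, he0tc⟩ := (mem_touchF hfin hsym).1 he0F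
      obtain ⟨pl, hne, hmem, hpw, hbal⟩ :=
        find_plok hfin hsym hq hsums he0E he0ni he0tc
      obtain ⟨q', hq', hsums', hpres, dm, hdm, hdmint⟩ :=
        push hfin hsym hp hq hsums hne (fun d hd => (hmem d hd).1) hpw hbal
      refine ihn q' hq' hsums' ?_
      have hdmF : dm ∈ touchF hfin W :=
        (mem_touchF hfin hsym).2 ⟨(hmem dm hdm).1.1, (hmem dm hdm).2⟩
      have hsub : (Finset.filter (fun e => ¬ Intl (q' e)) (touchF hfin W)) ⊆ (Finset.filter (fun e => ¬ Intl (q e)) (touchF hfin W)).erase dm := by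
        intro e he
        obtain ⟨heF, heni⟩ := Finset.mem_filter.1 he
        refine Finset.mem_erase.2 ⟨?_, Finset.mem_filter.2 ⟨heF, fun hi => heni (hpres e hi)⟩⟩
        intro hcon
        subst hcon
        exact heni hdmint
      calc (Finset.filter (fun e => ¬ Intl (q' e)) (touchF hfin W)).card
          ≤ ((Finset.filter (fun e => ¬ Intl (q e)) (touchF hfin W)).erase dm).card := Finset.card_le_card hsub
        _ ≤ n := by
            have hmemf : dm ∈ Finset.filter (fun e => ¬ Intl (q e)) (touchF hfin W) :=
              Finset.mem_filter.2 ⟨hdmF, (hmem dm hdm).1.2⟩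
            have := Finset.card_erase_of_mem hmemf
            omega

/-- The finite-support integralization lemma. -/
lemma finite_round (hfin : ∀ v : V, {w | (v, w) ∈ E}.Finite)
    (hsym : ∀ e ∈ E, Prod.swap e ∈ E) (hp : ∀ e ∈ E, p e = - p (Prod.swap e))
    (hsum : ∀ v : V, ∑ w ∈ (hfin v).toFinset, p (v, w) = (R v : ℝ))
    (W : Finset V) :
    ∃ q', Good E p q' ∧ (∀ v ∈ W, ∑ w ∈ (hfin v).toFinset, q' (v, w) = (R v : ℝ)) ∧
      ∀ e ∈ touchF hfin W, Intl (q' e) := by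
  classical
  set q0 : V × V → ℝ := fun e => if e ∈ E then p e else 0 with hq0
  have hgood : Good E p q0 := by
    constructor
    · intro e
      by_cases he : e ∈ E
      · simp only [hq0, if_pos he]
        by_cases hi : Intl (p e)
        · rw [(bounds_of_intl he hi).1, (bounds_of_intl he hi).2]
          exact ⟨le_refl _, le_refl _⟩
        · rw [(bounds_of_not_intl he hi).1, (bounds_of_not_intl he hi).2]
          exact ⟨Int.floor_le _, le_of_lt (Int.lt_floor_add_one _)⟩
      · simp only [hq0, if_neg he]
        rw [(not_mem_bounds he).1, (not_mem_bounds he).2]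
        exact ⟨le_refl _, le_refl _⟩
    · intro e he
      simp only [hq0, if_pos he, if_pos (hsym e he)]
      exact hp e he
  have hsums0 : ∀ v ∈ W, ∑ w ∈ (hfin v).toFinset, q0 (v, w) = (R v : ℝ) := by
    intro v _
    rw [← hsum v]
    refine Finset.sum_congr rfl fun w hw => ?_
    have hmem : (v, w) ∈ E := (hfin v).mem_toFinset.1 hw
    simp only [hq0, if_pos hmem]
  exact reduce hfin hsym hp _ q0 hgood hsums0 (le_refl _)

end Reduce

end Stmt10

theorem stmt10 {V : Type*} [Countable V] (E : Set (V × V))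
    (hsym : ∀ e ∈ E, Prod.swap e ∈ E)
    (hfin : ∀ v : V, {w | (v, w) ∈ E}.Finite)
    (R : V → ℤ) (p : V × V → ℝ)
    (hp : ∀ e ∈ E, p e = - p (Prod.swap e))
    (hsum : ∀ v : V, ∑ w ∈ (hfin v).toFinset, p (v, w) = (R v : ℝ)) :
    ∃ t : V × V → ℤ,
      (∀ e ∈ E, t e = ⌊p e⌋ ∨ t e = ⌊p e⌋ + 1) ∧
      (∀ e ∈ E, t e = - t (Prod.swap e)) ∧
      (∀ v : V, ∑ w ∈ (hfin v).toFinset, t (v, w) = R v) := by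
  classical
  set K : Set ((V × V) → ℝ) :=
    Set.pi Set.univ (fun e => Set.Icc (Stmt10.lb E p e) (Stmt10.ub E p e)) with hK
  have hKc : IsCompact K := isCompact_univ_pi fun e => isCompact_Icc
  set Z : (V ⊕ (V × V)) → Set ((V × V) → ℝ) := fun i =>
    match i with
    | Sum.inl v => {q | ∑ w ∈ (hfin v).toFinset, q (v, w) = (R v : ℝ)}
    | Sum.inr e => {q | e ∈ E →
        (q e = - q (Prod.swap e) ∧ (q e = (⌊p e⌋ : ℝ) ∨ q e = (⌊p e⌋ : ℝ) + 1))}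
    with hZ
  have hZc : ∀ i, IsClosed (Z i) := by
    intro i
    match i with
    | Sum.inl v =>
      show IsClosed {q : (V × V) → ℝ | ∑ w ∈ (hfin v).toFinset, q (v, w) = (R v : ℝ)}
      refine isClosed_eq ?_ continuous_const
      have hc : ∀ w : V, Continuous fun q : (V × V) → ℝ => q (v, w) := fun w =>
        continuous_apply ((v, w) : V × V)
      exact continuous_finset_sum _ fun w _ => hc w
    | Sum.inr e =>
      by_cases he : e ∈ E
      · have hzeq : Z (Sum.inr e) = {q : (V × V) → ℝ | q e = - q (Prod.swap e)} ∩
            ({q : (V × V) → ℝ | q e = (⌊p e⌋ : ℝ)} ∪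
             {q : (V × V) → ℝ | q e = (⌊p e⌋ : ℝ) + 1}) := by
          ext q
          simp only [hZ, Set.mem_setOf_eq, Set.mem_inter_iff, Set.mem_union]
          constructor
          · intro h; exact h he
          · intro h _; exact h
        rw [hzeq]
        have hce : Continuous fun q : (V × V) → ℝ => q e := continuous_apply e
        have hcs : Continuous fun q : (V × V) → ℝ => q (Prod.swap e) :=
          continuous_apply (Prod.swap e)
        exact (isClosed_eq hce hcs.neg).inter
          ((isClosed_eq hce continuous_const).union (isClosed_eq hce continuous_const))
      · have hzeq : Z (Sum.inr e) = Set.univ := by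
          ext q
          simp only [hZ, Set.mem_setOf_eq, Set.mem_univ, iff_true]
          intro h; exact absurd h he
        rw [hzeq]
        exact isClosed_univ
  have hfip : ∀ u : Finset (V ⊕ (V × V)), (K ∩ ⋂ i ∈ u, Z i).Nonempty := by
    intro u
    set W : Finset V := u.biUnion (fun i => match i with
      | Sum.inl v => {v}
      | Sum.inr e => {e.1, e.2}) with hW
    obtain ⟨q, hgood, hsums, hint⟩ := Stmt10.finite_round hfin hsym hp hsum W
    refine ⟨q, ?_, ?_⟩
    · rw [hK, Set.mem_univ_pi]
      exact fun e => hgood.1 e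
    · rw [Set.mem_iInter₂]
      intro i hi
      match i with
      | Sum.inl v =>
        have hvW : v ∈ W := Finset.mem_biUnion.2 ⟨Sum.inl v, hi, by simp⟩
        exact hsums v hvW
      | Sum.inr e =>
        intro he
        have htc : e.1 ∈ W := Finset.mem_biUnion.2 ⟨Sum.inr e, hi, by simp⟩
        have heF : e ∈ Stmt10.touchF hfin W :=
          (Stmt10.mem_touchF hfin hsym).2 ⟨he, Or.inl htc⟩
        exact ⟨hgood.2 e he, Stmt10.intl_in_bounds hgood he (hint e heF)⟩
  obtain ⟨q, hqK, hqZ⟩ := hKc.inter_iInter_nonempty Z hZc hfip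
  rw [Set.mem_iInter] at hqZ
  have hA : ∀ v, ∑ w ∈ (hfin v).toFinset, q (v, w) = (R v : ℝ) := fun v => hqZ (Sum.inl v)
  have hB : ∀ e ∈ E, q e = - q (Prod.swap e) := fun e he => (hqZ (Sum.inr e) he).1
  have hD : ∀ e ∈ E, q e = (⌊p e⌋ : ℝ) ∨ q e = (⌊p e⌋ : ℝ) + 1 :=
    fun e he => (hqZ (Sum.inr e) he).2
  have hcast : ∀ e ∈ E, q e = ((⌊q e⌋ : ℤ) : ℝ) := by
    intro e he
    rcases hD e he with h | h
    · rw [h, Int.floor_intCast]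
    · rw [h, show ((⌊p e⌋ : ℝ) + 1) = ((⌊p e⌋ + 1 : ℤ) : ℝ) by push_cast; ring,
        Int.floor_intCast]
  refine ⟨fun e => ⌊q e⌋, ?_, ?_, ?_⟩
  · intro e he
    show ⌊q e⌋ = ⌊p e⌋ ∨ ⌊q e⌋ = ⌊p e⌋ + 1
    rcases hD e he with h | h
    · left; rw [h, Int.floor_intCast]
    · right
      rw [h, show ((⌊p e⌋ : ℝ) + 1) = ((⌊p e⌋ + 1 : ℤ) : ℝ) by push_cast; ring,
        Int.floor_intCast]
  · intro e he
    show ⌊q e⌋ = - ⌊q (Prod.swap e)⌋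
    have hse : Prod.swap e ∈ E := hsym e he
    have h1 := hB e he
    have h2 : q (Prod.swap e) = ((-⌊q e⌋ : ℤ) : ℝ) := by
      rw [hcast e he] at h1
      push_cast
      linarith
    rw [h2, Int.floor_intCast]
    simp
  · intro v
    show ∑ w ∈ (hfin v).toFinset, ⌊q (v, w)⌋ = R v
    have hsummed : ((∑ w ∈ (hfin v).toFinset, ⌊q (v, w)⌋ : ℤ) : ℝ) = ((R v : ℤ) : ℝ) := by
      push_cast
      rw [← hA v]
      refine Finset.sum_congr rfl fun w hw => ?_
      exact (hcast (v, w) ((hfin v).mem_toFinset.1 hw)).symm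
    exact_mod_cast hsummed
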